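/- Let A be an n'×n' Hermitian matrix with e₀ zero eigenvalues, and let v₁,…,vₙ ∈ ℂ^{n'} be linearly independent vectors with vₗ*Avⱼ = 0 for all 1 ≤ j,l ≤ n. Let E = span(v₁,…,vₙ) and F = span(Av₁,…,Avₙ). Then dim F ≥ n − e₀, E ∩ F = {0}, and if n' + e₀ = 2n then ℂ^{n'} = E ⊕ F. -/
import Mathlib


open Matrix

/-- If `v₁,…,vₙ` are linearly independent and pairwise `A`-isotropic for a Hermitian
matrix `A` with `e₀` zero eigenvalues, then `F = span(Av₁,…,Avₙ)` has dimension at least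
`n - e₀`, `E ∩ F = 0`, and if `n' + e₀ = 2n` then `ℂ^{n'} = E ⊕ F`. -/
theorem stmt1 (n n' : ℕ) (A : Matrix (Fin n') (Fin n') ℂ) (hA : A.IsHermitian)
    (v : Fin n → (Fin n' → ℂ)) (hv : LinearIndependent ℂ v)
    (h : ∀ j l : Fin n, dotProduct (star (v l)) (A.mulVec (v j)) = 0) :
    n - Nat.card {i : Fin n' // hA.eigenvalues i = 0} ≤
        Module.finrank ℂ (Submodule.span ℂ (Set.range fun j => A.mulVec (v j))) ∧
      Submodule.span ℂ (Set.range v) ⊓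
          Submodule.span ℂ (Set.range fun j => A.mulVec (v j)) = ⊥ ∧
      (n' + Nat.card {i : Fin n' // hA.eigenvalues i = 0} = 2 * n →
        IsCompl (Submodule.span ℂ (Set.range v))
          (Submodule.span ℂ (Set.range fun j => A.mulVec (v j)))) := by
  classical
  set e₀ := Nat.card {i : Fin n' // hA.eigenvalues i = 0} with he₀
  set E := Submodule.span ℂ (Set.range v) with hE
  set F := Submodule.span ℂ (Set.range fun j => A.mulVec (v j)) with hF
  set f := A.mulVecLin with hf
  have hFeq : F = E.map f := by
    rw [hF, hE, ← Submodule.span_image, ← Set.range_comp]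
    rfl
  have hEfin : Module.finrank ℂ E = n := by
    rw [hE, finrank_span_eq_card hv, Fintype.card_fin]
  -- e₀ and the rank of A
  have he₀le : e₀ ≤ n' := by
    rw [he₀, Nat.card_eq_fintype_card]
    simpa using Fintype.card_subtype_le (fun i => hA.eigenvalues i = 0)
  have hrank : A.rank = n' - e₀ := by
    rw [hA.rank_eq_card_non_zero_eigs, he₀, Nat.card_eq_fintype_card]
    simpa using Fintype.card_subtype_compl (fun i => hA.eigenvalues i = 0)
  have hkerf : Module.finrank ℂ (LinearMap.ker f) = e₀ := by
    have h1 := LinearMap.finrank_range_add_finrank_ker f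
    have h2 : Module.finrank ℂ (LinearMap.range f) = n' - e₀ := hrank
    rw [h2, Module.finrank_fin_fun] at h1
    omega
  -- restriction of f to E
  set g := f.domRestrict E with hg
  have hrangeg : LinearMap.range g = E.map f := LinearMap.range_domRestrict E f
  have hkerg : Module.finrank ℂ (LinearMap.ker g) ≤ e₀ := by
    rw [hg, LinearMap.ker_domRestrict]
    rw [← hkerf, ← Submodule.finrank_map_subtype_eq E, Submodule.map_comap_subtype]
    exact Submodule.finrank_mono inf_le_right
  have hrn : Module.finrank ℂ F + Module.finrank ℂ (LinearMap.ker g) = n := by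
    have := LinearMap.finrank_range_add_finrank_ker g
    rw [hrangeg, ← hFeq, hEfin] at this
    exact this
  -- bilinear vanishing on E × E
  have hbil : ∀ y ∈ E, ∀ x ∈ E, dotProduct (star x) (A.mulVec y) = 0 := by
    intro y hy
    induction hy using Submodule.span_induction with
    | mem y hy =>
      obtain ⟨j, rfl⟩ := hy
      intro x hx
      induction hx using Submodule.span_induction with
      | mem x hx => obtain ⟨l, rfl⟩ := hx; exact h j l
      | zero => simp
      | add a b _ _ ha hb => rw [star_add, add_dotProduct, ha, hb, add_zero]
      | smul c a _ ha => rw [star_smul, smul_dotProduct, ha, smul_zero]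
    | zero => intro x hx; simp
    | add a b _ _ ha hb =>
      intro x hx
      rw [Matrix.mulVec_add, dotProduct_add, ha x hx, hb x hx, add_zero]
    | smul c a _ ha =>
      intro x hx
      rw [Matrix.mulVec_smul, dotProduct_smul, ha x hx, smul_zero]
  -- E ⊓ F = ⊥
  have hinf : E ⊓ F = ⊥ := by
    rw [eq_bot_iff]
    rintro x ⟨hxE, hxF⟩
    rw [hFeq] at hxF
    obtain ⟨u, huE, rfl⟩ := Submodule.mem_map.mp hxF
    have hfu : f u = A.mulVec u := rfl
    have hz : dotProduct (star (f u)) (f u) = 0 := by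
      rw [hfu, Matrix.star_mulVec, ← Matrix.dotProduct_mulVec, hA.eq]
      exact hbil (A.mulVec u) (show A.mulVec u ∈ E from hxE) u huE
    open ComplexOrder in
    have : f u = 0 := dotProduct_star_self_eq_zero.mp hz
    simp [this]
  refine ⟨by omega, hinf, ?_⟩
  -- complement
  intro htop
  have hsup : Module.finrank ℂ ↥(E ⊔ F) = n + Module.finrank ℂ F := by
    have := Submodule.finrank_sup_add_finrank_inf_eq E F
    rw [hinf] at this
    simp only [finrank_bot, add_zero] at this
    rw [this, hEfin]
  have htot : Module.finrank ℂ ↥(E ⊔ F) = n' := by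
    have hle : Module.finrank ℂ ↥(E ⊔ F) ≤ n' := by
      simpa [Module.finrank_fin_fun] using Submodule.finrank_le (E ⊔ F)
    omega
  refine ⟨disjoint_iff.mpr hinf, codisjoint_iff.mpr ?_⟩
  apply Submodule.eq_top_of_finrank_eq
  rw [htot, Module.finrank_fin_fun]
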